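/- There exists a constant C > 0 such that for all integers n and all p with 4 ≤ p ≤ n − 1, one has P_4(p,n) ≤ C·p^4·2^{−n}, where the constant C does not depend on p. -/

import Mathlib

open scoped Classical

noncomputable section

/-- The `{±1}`-vector in `ℝ^n` encoded by a Boolean vector. -/
def signVec {n : ℕ} (u : Fin n → Bool) : Fin n → ℝ := fun i => if u i then 1 else -1

/-- `v` is a `{±1}`-vector: all coordinates lie in `{-1, 1}`. -/
def IsPM {n : ℕ} (v : Fin n → ℝ) : Prop := ∀ i, v i = 1 ∨ v i = -1

/-- The real span of the `{±1}`-vectors encoded by `W` contains a `{±1}`-vector different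
from `±(W j)` for all `j`. -/
def KSOEvent {p n : ℕ} (W : Fin p → Fin n → Bool) : Prop :=
  ∃ x : Fin n → ℝ,
    x ∈ Submodule.span ℝ (Set.range fun j => signVec (W j)) ∧ IsPM x ∧
    ∀ j, x ≠ signVec (W j) ∧ x ≠ -signVec (W j)

/-- `ℙ(p, n)`: the probability that the real span of `p` uniformly random `{±1}`-vectors
in `ℝ^n` contains a `{±1}`-vector different from `±v_1, …, ±v_p`. -/
def probKSO (p n : ℕ) : ℝ :=
  ((Finset.univ.filter fun W : Fin p → Fin n → Bool => KSOEvent W).card : ℝ) / 2 ^ (p * n)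

/-- Some three of the vectors encoded by `W` have a real linear combination that is a
`{±1}`-vector different from `±` those three vectors. -/
def P3Event {p n : ℕ} (W : Fin p → Fin n → Bool) : Prop :=
  ∃ j₁ j₂ j₃ : Fin p, j₁ ≠ j₂ ∧ j₁ ≠ j₃ ∧ j₂ ≠ j₃ ∧
    ∃ a b c : ℝ, ∃ x : Fin n → ℝ,
      x = a • signVec (W j₁) + b • signVec (W j₂) + c • signVec (W j₃) ∧ IsPM x ∧
      (x ≠ signVec (W j₁) ∧ x ≠ -signVec (W j₁)) ∧
      (x ≠ signVec (W j₂) ∧ x ≠ -signVec (W j₂)) ∧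
      (x ≠ signVec (W j₃) ∧ x ≠ -signVec (W j₃))

/-- `ℙ₃(p, n)`: the probability of `P3Event` for `p` uniformly random `{±1}`-vectors in `ℝ^n`. -/
def probP3 (p n : ℕ) : ℝ :=
  ((Finset.univ.filter fun W : Fin p → Fin n → Bool => P3Event W).card : ℝ) / 2 ^ (p * n)

/-- Some `m` of the vectors encoded by `W` have a linear combination with all coefficients
nonzero that is a `{±1}`-vector. -/
def PmEvent (m : ℕ) {p n : ℕ} (W : Fin p → Fin n → Bool) : Prop :=
  ∃ j : Fin m → Fin p, Function.Injective j ∧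
    ∃ α : Fin m → ℝ, (∀ i, α i ≠ 0) ∧ IsPM (∑ i, α i • signVec (W (j i)))

/-- `ℙ_m(p, n)`: the probability of `PmEvent m` for `p` uniformly random `{±1}`-vectors
in `ℝ^n`. -/
def probPm (m p n : ℕ) : ℝ :=
  ((Finset.univ.filter fun W : Fin p → Fin n → Bool => PmEvent m W).card : ℝ) / 2 ^ (p * n)

/-- `𝓜_m(p, n)`: the set of `p × n` `{±1}`-matrices (encoded row-wise by Booleans) with
linearly independent rows, some `m` of which have a linear combination with nonzero
coefficients that is a `{±1}`-vector. -/
def MmSet (m p n : ℕ) : Finset (Fin p → Fin n → Bool) :=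
  Finset.univ.filter fun M =>
    (LinearIndependent ℝ fun i => signVec (M i)) ∧ PmEvent m M

/-- `R_m(p, n) = |𝓜_m(p, n)| / 2^(p n)`. -/
def Rm (m p n : ℕ) : ℝ := ((MmSet m p n).card : ℝ) / 2 ^ (p * n)

/-- `ℙ_{p,n}`: the probability that a uniformly random `p × n` `{±1}`-matrix has rank
less than `p`, i.e. its rows are linearly dependent over `ℝ`. -/
def probSingular (p n : ℕ) : ℝ :=
  ((Finset.univ.filter fun M : Fin p → Fin n → Bool =>
      ¬ LinearIndependent ℝ fun i => signVec (M i)).card : ℝ) / 2 ^ (p * n)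

/-- The vector `(1, b_1, …, b_n) ∈ E_n ⊂ ℝ^{n+1}` encoded by a Boolean vector. -/
def eVec {n : ℕ} (u : Fin n → Bool) : Fin (n + 1) → ℝ := Fin.cons 1 (signVec u)

/-- The number of ordered `n`-tuples of distinct, linearly independent vectors from `E_n`
whose real span contains a `{±1}`-vector of `ℝ^{n+1}` different from `±w_1, …, ±w_n`. -/
def KSOECard (n : ℕ) : ℕ :=
  (Finset.univ.filter fun W : Fin n → (Fin n → Bool) =>
    Function.Injective W ∧ (LinearIndependent ℝ fun i => eVec (W i)) ∧
    ∃ x : Fin (n + 1) → ℝ,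
      x ∈ Submodule.span ℝ (Set.range fun i => eVec (W i)) ∧ IsPM x ∧
      ∀ i, x ≠ eVec (W i) ∧ x ≠ -eVec (W i)).card

/-- `P(2, n)`: the number of threshold functions of `n` variables. -/
def numThreshold (n : ℕ) : ℕ :=
  (Finset.univ.filter fun f : (Fin n → Bool) → Bool =>
    ∃ a : ℝ, ∃ w : Fin n → ℝ,
      ∀ x, f x = true ↔ 0 < a + ∑ i, w i * signVec x i).card



def tval (a : ℝ) (b : Bool) : ℝ := if b then a else -a

def gsum (α : Fin 4 → ℝ) (c : Fin 4 → Bool) : ℝ := ∑ i, tval (α i) (c i)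

lemma gsum_four (α : Fin 4 → ℝ) (c : Fin 4 → Bool) :
    gsum α c = tval (α 0) (c 0) + tval (α 1) (c 1) + tval (α 2) (c 2) + tval (α 3) (c 3) := by
  simp [gsum, Fin.sum_univ_four]

lemma pair_cancel (a b : ℝ) (ha : a ≠ 0) (hb : b ≠ 0) (h1 : a ≠ b) (h2 : a ≠ -b)
    (x y x' y' : Bool) (h : tval a x + tval b y = tval a x' + tval b y') :
    x = x' ∧ y = y' := by
  cases x <;> cases y <;> cases x' <;> cases y' <;> simp [tval] at h ⊢ <;>
    first
      | (exact absurd (by linarith) ha)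
      | (exact absurd (by linarith) hb)
      | (exact absurd (by linarith) h1)
      | (exact absurd (by linarith) h2)

lemma count_le_of_pair (α : Fin 4 → ℝ) (hα : ∀ i, α i ≠ 0) (i j k l : Fin 4)
    (hsum : ∀ c : Fin 4 → Bool,
      gsum α c = tval (α i) (c i) + tval (α j) (c j) + tval (α k) (c k) + tval (α l) (c l))
    (hext : ∀ c c' : Fin 4 → Bool, c i = c' i → c j = c' j → c k = c' k → c l = c' l → c = c')
    (h1 : α i ≠ α j) (h2 : α i ≠ -α j) :
    (Finset.univ.filter fun c : Fin 4 → Bool => gsum α c = 1).card ≤ 4 := by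
  have := Finset.card_le_card_of_injOn (f := fun c : Fin 4 → Bool => (c k, c l))
    (s := Finset.univ.filter fun c : Fin 4 → Bool => gsum α c = 1)
    (t := (Finset.univ : Finset (Bool × Bool)))
    (fun a _ => Finset.mem_univ _)
    (by
      intro c hc c' hc' h
      simp only [Finset.coe_filter, Set.mem_setOf_eq, Finset.mem_univ, true_and] at hc hc'
      have hk : c k = c' k := congrArg Prod.fst h
      have hl : c l = c' l := congrArg Prod.snd h
      have e1 := hsum c
      have e2 := hsum c'
      rw [hc] at e1; rw [hc'] at e2
      rw [hk, hl] at e1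
      have heq : tval (α i) (c i) + tval (α j) (c j)
          = tval (α i) (c' i) + tval (α j) (c' j) := by linarith
      obtain ⟨hi, hj⟩ := pair_cancel (α i) (α j) (hα i) (hα j) h1 h2 _ _ _ _ heq
      exact hext c c' hi hj hk hl)
  simpa using this

lemma cardT (a : ℝ) (ha : 0 < a) :
    (Finset.univ.filter fun b : Fin 4 → Bool => (∑ i, tval a (b i)) = 1).card ≤ 4 := by
  by_cases h2 : a = 1/2
  · subst h2
    have hsub : (Finset.univ.filter fun b : Fin 4 → Bool => (∑ i, tval (1/2) (b i)) = 1)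
        ⊆ {![false, true, true, true], ![true, false, true, true],
           ![true, true, false, true], ![true, true, true, false]} := by
      intro b hb
      simp only [Finset.mem_filter, Finset.mem_univ, true_and, Fin.sum_univ_four] at hb
      simp only [Finset.mem_insert, Finset.mem_singleton]
      cases hb0 : b 0 <;> cases hb1 : b 1 <;> cases hb2 : b 2 <;> cases hb3 : b 3 <;>
        rw [hb0, hb1, hb2, hb3] at hb <;> simp [tval] at hb <;>
        first
          | (exfalso; linarith)
          | (first
              | (left; funext i; fin_cases i <;> simp [hb0, hb1, hb2, hb3] <;> done)
              | (right; left; funext i; fin_cases i <;> simp [hb0, hb1, hb2, hb3] <;> done)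
              | (right; right; left; funext i; fin_cases i <;> simp [hb0, hb1, hb2, hb3] <;> done)
              | (right; right; right; funext i; fin_cases i <;> simp [hb0, hb1, hb2, hb3] <;> done))
    calc _ ≤ _ := Finset.card_le_card hsub
      _ ≤ 4 := by
        apply le_trans (Finset.card_insert_le _ _)
        apply Nat.succ_le_succ
        apply le_trans (Finset.card_insert_le _ _)
        apply Nat.succ_le_succ
        apply le_trans (Finset.card_insert_le _ _)
        apply Nat.succ_le_succ
        simp
  · by_cases h4 : a = 1/4
    · subst h4
      have hsub : (Finset.univ.filter fun b : Fin 4 → Bool => (∑ i, tval (1/4) (b i)) = 1)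
          ⊆ {fun _ => true} := by
        intro b hb
        simp only [Finset.mem_filter, Finset.mem_univ, true_and, Fin.sum_univ_four] at hb
        simp only [Finset.mem_singleton]
        cases hb0 : b 0 <;> cases hb1 : b 1 <;> cases hb2 : b 2 <;> cases hb3 : b 3 <;>
          rw [hb0, hb1, hb2, hb3] at hb <;> simp [tval] at hb <;>
          first
            | (exfalso; linarith)
            | (funext i; fin_cases i <;> simp [hb0, hb1, hb2, hb3])
      calc _ ≤ _ := Finset.card_le_card hsub
        _ ≤ 4 := by simp
    · have : (Finset.univ.filter fun b : Fin 4 → Bool => (∑ i, tval a (b i)) = 1) = ∅ := by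
        apply Finset.eq_empty_of_forall_notMem
        intro b hb
        simp only [Finset.mem_filter, Finset.mem_univ, true_and, Fin.sum_univ_four] at hb
        cases hb0 : b 0 <;> cases hb1 : b 1 <;> cases hb2 : b 2 <;> cases hb3 : b 3 <;>
          rw [hb0, hb1, hb2, hb3] at hb <;> simp [tval] at hb <;>
          first
            | linarith
            | (exact h2 (by linarith))
            | (exact h4 (by linarith))
      rw [this]; simp

lemma count_allpm (α : Fin 4 → ℝ) (a : ℝ) (ha : 0 < a) (hsign : ∀ i, α i = a ∨ α i = -a) :
    (Finset.univ.filter fun c : Fin 4 → Bool => gsum α c = 1).card ≤ 4 := by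
  have ha' : a ≠ 0 := ne_of_gt ha
  have key : ∀ (c : Fin 4 → Bool) (i : Fin 4),
      tval a (decide (tval (α i) (c i) = a)) = tval (α i) (c i) := by
    intro c i
    rcases hsign i with h | h <;> cases hc : c i <;>
      simp [tval, h, hc] <;> intro hh <;> linarith
  refine le_trans (Finset.card_le_card_of_injOn
    (f := fun c : Fin 4 → Bool => fun i => decide (tval (α i) (c i) = a))
    (t := Finset.univ.filter fun b : Fin 4 → Bool => (∑ i, tval a (b i)) = 1)
    ?_ ?_) (cardT a ha)
  · intro c hc
    simp only [Finset.coe_filter, Set.mem_setOf_eq, Finset.mem_filter, Finset.mem_univ, true_and] at hc ⊢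
    rw [show (∑ i, tval a (decide (tval (α i) (c i) = a))) = gsum α c from
      Finset.sum_congr rfl fun i _ => key c i]
    exact hc
  · intro c _ c' _ h
    funext i
    have hi : decide (tval (α i) (c i) = a) = decide (tval (α i) (c' i) = a) := congrFun h i
    have e1 := key c i
    have e2 := key c' i
    rw [hi] at e1
    have : tval (α i) (c i) = tval (α i) (c' i) := e1.symm.trans e2
    have hαi : α i ≠ 0 := by rcases hsign i with h' | h' <;> rw [h'] <;> intro hh <;> apply ha' <;> linarith
    cases hc : c i <;> cases hc' : c' i <;> rw [hc, hc'] at this <;> simp [tval] at this ⊢ <;>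
      exact absurd (by linarith) hαi

lemma count_one_le (α : Fin 4 → ℝ) (hα : ∀ i, α i ≠ 0) :
    (Finset.univ.filter fun c : Fin 4 → Bool => gsum α c = 1).card ≤ 4 := by
  by_cases h01 : α 0 = α 1 ∨ α 0 = -α 1
  · by_cases h23 : α 2 = α 3 ∨ α 2 = -α 3
    · by_cases h02 : α 0 = α 2 ∨ α 0 = -α 2
      · -- all coefficients are ± α 0
        have hsign0 : ∀ i, α i = α 0 ∨ α i = -α 0 := by
          intro i
          fin_cases i
          · exact Or.inl rfl
          · show α 1 = α 0 ∨ α 1 = -α 0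
            rcases h01 with h | h
            · left; linarith
            · right; linarith
          · show α 2 = α 0 ∨ α 2 = -α 0
            rcases h02 with h | h
            · left; linarith
            · right; linarith
          · show α 3 = α 0 ∨ α 3 = -α 0
            rcases h23 with h | h <;> rcases h02 with h' | h' <;>
              first | (left; linarith) | (right; linarith)
        rcases lt_or_gt_of_ne (hα 0) with hneg | hpos
        · exact count_allpm α (-α 0) (by linarith) (fun i => by
            rcases hsign0 i with h | h
            · right; linarith
            · left; linarith)
        · exact count_allpm α (α 0) hpos hsign0
      · push_neg at h02
        exact count_le_of_pair α hα 0 2 1 3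
          (fun c => by rw [gsum_four]; ring)
          (fun c c' h0 h2 h1 h3 => by funext i; fin_cases i <;> assumption)
          h02.1 h02.2
    · push_neg at h23
      exact count_le_of_pair α hα 2 3 0 1
        (fun c => by rw [gsum_four]; ring)
        (fun c c' h2 h3 h0 h1 => by funext i; fin_cases i <;> assumption)
        h23.1 h23.2
  · push_neg at h01
    exact count_le_of_pair α hα 0 1 2 3
      (fun c => gsum_four α c)
      (fun c c' h0 h1 h2 h3 => by funext i; fin_cases i <;> assumption)
      h01.1 h01.2

lemma count_pm_le (α : Fin 4 → ℝ) (hα : ∀ i, α i ≠ 0) :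
    (Finset.univ.filter fun c : Fin 4 → Bool => gsum α c = 1 ∨ gsum α c = -1).card ≤ 8 := by
  have hsplit : (Finset.univ.filter fun c : Fin 4 → Bool => gsum α c = 1 ∨ gsum α c = -1)
      = (Finset.univ.filter fun c : Fin 4 → Bool => gsum α c = 1)
        ∪ (Finset.univ.filter fun c : Fin 4 → Bool => gsum α c = -1) := Finset.filter_or _ _ _
  have hneg : (Finset.univ.filter fun c : Fin 4 → Bool => gsum α c = -1).card
      ≤ (Finset.univ.filter fun c : Fin 4 → Bool => gsum α c = 1).card := by
    apply Finset.card_le_card_of_injOn (f := fun c i => !(c i))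
    · intro c hc
      simp only [Finset.coe_filter, Set.mem_setOf_eq, Finset.mem_filter, Finset.mem_univ, true_and] at hc ⊢
      have : gsum α (fun i => !(c i)) = -gsum α c := by
        rw [gsum, gsum, ← Finset.sum_neg_distrib]
        exact Finset.sum_congr rfl fun i _ => by cases c i <;> simp [tval]
      rw [this, hc]; norm_num
    · intro c _ c' _ h
      funext i
      have := congrFun h i
      exact Bool.not_inj this
  rw [hsplit]
  calc _ ≤ _ := Finset.card_union_le _ _
    _ ≤ 4 + 4 := Nat.add_le_add (count_one_le α hα) (hneg.trans (count_one_le α hα))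
    _ = 8 := rfl


lemma coord_eq {n : ℕ} (α : Fin 4 → ℝ) (V : Fin 4 → Fin n → Bool) (k : Fin n) :
    (∑ i, α i • signVec (V i)) k = gsum α (fun i => V i k) := by
  rw [Finset.sum_apply, gsum]
  exact Finset.sum_congr rfl fun i _ => by
    cases h : V i k <;> simp [signVec, tval, h]

lemma cols_count {n : ℕ} (S : Finset (Fin 4 → Bool)) :
    (Finset.univ.filter fun V : Fin 4 → Fin n → Bool => ∀ k, (fun i => V i k) ∈ S).card
      ≤ S.card ^ n := by
  have := Finset.card_le_card_of_injOn
    (f := fun (V : Fin 4 → Fin n → Bool) (k : Fin n) (i : Fin 4) => V i k)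
    (s := Finset.univ.filter fun V : Fin 4 → Fin n → Bool => ∀ k, (fun i => V i k) ∈ S)
    (t := Fintype.piFinset fun _ : Fin n => S)
    (by
      intro V hV
      simp only [Finset.coe_filter, Set.mem_setOf_eq, Finset.mem_filter, Finset.mem_univ, true_and] at hV
      exact Fintype.mem_piFinset.2 fun k => hV k)
    (by
      intro V _ V' _ h
      funext i k
      exact congrFun (congrFun h k) i)
  calc _ ≤ (Fintype.piFinset fun _ : Fin n => S).card := this
    _ = S.card ^ n := by
      rw [Fintype.card_piFinset]
      simp


lemma bad4_count (n : ℕ) :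
    (Finset.univ.filter fun V : Fin 4 → Fin n → Bool =>
      ∃ α : Fin 4 → ℝ, (∀ i, α i ≠ 0) ∧ IsPM (∑ i, α i • signVec (V i))).card
      ≤ 65536 * 8 ^ n := by
  have hsub : (Finset.univ.filter fun V : Fin 4 → Fin n → Bool =>
      ∃ α : Fin 4 → ℝ, (∀ i, α i ≠ 0) ∧ IsPM (∑ i, α i • signVec (V i)))
      ⊆ ((Finset.univ : Finset (Finset (Fin 4 → Bool))).filter fun S => S.card ≤ 8).biUnion
          (fun S => Finset.univ.filter fun V : Fin 4 → Fin n → Bool =>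
            ∀ k, (fun i => V i k) ∈ S) := by
    intro V hV
    simp only [Finset.mem_filter, Finset.mem_univ, true_and] at hV
    obtain ⟨α, hα, hPM⟩ := hV
    refine Finset.mem_biUnion.2 ⟨Finset.univ.filter fun c : Fin 4 → Bool =>
      gsum α c = 1 ∨ gsum α c = -1, ?_, ?_⟩
    · simp only [Finset.mem_filter, Finset.mem_univ, true_and]
      exact count_pm_le α hα
    · simp only [Finset.mem_filter, Finset.mem_univ, true_and]
      intro k
      have := hPM k
      rw [coord_eq α V k] at this
      exact this
  calc _ ≤ _ := Finset.card_le_card hsub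
    _ ≤ ∑ S ∈ (Finset.univ : Finset (Finset (Fin 4 → Bool))).filter fun S => S.card ≤ 8,
          (Finset.univ.filter fun V : Fin 4 → Fin n → Bool =>
            ∀ k, (fun i => V i k) ∈ S).card := Finset.card_biUnion_le
    _ ≤ ∑ S ∈ (Finset.univ : Finset (Finset (Fin 4 → Bool))).filter fun S => S.card ≤ 8,
          8 ^ n := by
        refine Finset.sum_le_sum fun S hS => ?_
        simp only [Finset.mem_filter, Finset.mem_univ, true_and] at hS
        exact (cols_count S).trans (Nat.pow_le_pow_left hS n)
    _ ≤ 65536 * 8 ^ n := by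
        rw [Finset.sum_const, smul_eq_mul]
        apply Nat.mul_le_mul_right
        calc _ ≤ (Finset.univ : Finset (Finset (Fin 4 → Bool))).card :=
              Finset.card_le_card (Finset.filter_subset _ _)
          _ = 65536 := by simp

lemma fiber_count {p n : ℕ} (j : Fin 4 → Fin p) (hj : Function.Injective j)
    (V : Fin 4 → Fin n → Bool) :
    (Finset.univ.filter fun W : Fin p → Fin n → Bool => (fun i => W (j i)) = V).card
      ≤ (2 ^ n) ^ (p - 4) := by
  classical
  set R : Finset (Fin p) := (Finset.univ.image j)ᶜ with hR
  have hcard : R.card = p - 4 := by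
    rw [hR, Finset.card_compl, Finset.card_image_of_injective _ hj]
    simp
  have := Finset.card_le_card_of_injOn
    (f := fun (W : Fin p → Fin n → Bool) (i : R) => W i.1)
    (s := Finset.univ.filter fun W : Fin p → Fin n → Bool => (fun i => W (j i)) = V)
    (t := (Finset.univ : Finset (R → Fin n → Bool)))
    (fun _ _ => Finset.mem_univ _)
    (by
      intro W hW W' hW' h
      simp only [Finset.coe_filter, Set.mem_setOf_eq, Finset.mem_univ, true_and] at hW hW'
      funext i
      by_cases hi : i ∈ Finset.univ.image j
      · obtain ⟨m, _, rfl⟩ := Finset.mem_image.1 hi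
        rw [show W (j m) = V m from congrFun hW m, show W' (j m) = V m from congrFun hW' m]
      · exact congrFun h ⟨i, by simpa [hR] using hi⟩)
  calc _ ≤ (Finset.univ : Finset (R → Fin n → Bool)).card := this
    _ = (2 ^ n) ^ (p - 4) := by
      rw [Finset.card_univ, Fintype.card_fun]
      congr 1
      · simp
      · rw [Fintype.card_coe, hcard]

lemma perj_count {p n : ℕ} (j : Fin 4 → Fin p) (hj : Function.Injective j) :
    (Finset.univ.filter fun W : Fin p → Fin n → Bool =>
      ∃ α : Fin 4 → ℝ, (∀ i, α i ≠ 0) ∧ IsPM (∑ i, α i • signVec (W (j i)))).card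
      ≤ (2 ^ n) ^ (p - 4) * (65536 * 8 ^ n) := by
  classical
  set s := Finset.univ.filter fun W : Fin p → Fin n → Bool =>
    ∃ α : Fin 4 → ℝ, (∀ i, α i ≠ 0) ∧ IsPM (∑ i, α i • signVec (W (j i))) with hs
  have h1 : s.card ≤ (2 ^ n) ^ (p - 4) * (s.image fun W => fun i => W (j i)).card := by
    apply Finset.card_le_mul_card_image
    intro V _
    calc (s.filter fun W => (fun i => W (j i)) = V).card
        ≤ (Finset.univ.filter fun W : Fin p → Fin n → Bool => (fun i => W (j i)) = V).card :=
          Finset.card_le_card (by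
            intro W hW
            simp only [Finset.mem_filter] at hW ⊢
            exact ⟨Finset.mem_univ _, hW.2⟩)
      _ ≤ (2 ^ n) ^ (p - 4) := fiber_count j hj V
  have h2 : (s.image fun W => fun i => W (j i)).card ≤ 65536 * 8 ^ n := by
    refine le_trans (Finset.card_le_card ?_) (bad4_count n)
    intro V hV
    obtain ⟨W, hW, rfl⟩ := Finset.mem_image.1 hV
    simp only [hs, Finset.mem_filter, Finset.mem_univ, true_and] at hW ⊢
    exact hW
  calc s.card ≤ _ := h1
    _ ≤ _ := Nat.mul_le_mul_left _ h2


lemma main_count (p n : ℕ) :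
    (Finset.univ.filter fun W : Fin p → Fin n → Bool => PmEvent 4 W).card
      ≤ p ^ 4 * ((2 ^ n) ^ (p - 4) * (65536 * 8 ^ n)) := by
  classical
  have hsub : (Finset.univ.filter fun W : Fin p → Fin n → Bool => PmEvent 4 W)
      ⊆ ((Finset.univ : Finset (Fin 4 → Fin p)).filter fun j => Function.Injective j).biUnion
          (fun j => Finset.univ.filter fun W : Fin p → Fin n → Bool =>
            ∃ α : Fin 4 → ℝ, (∀ i, α i ≠ 0) ∧ IsPM (∑ i, α i • signVec (W (j i)))) := by
    intro W hW
    simp only [Finset.mem_filter, Finset.mem_univ, true_and] at hW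
    obtain ⟨j, hj, α, hα, hPM⟩ := hW
    exact Finset.mem_biUnion.2 ⟨j, by simp [hj], by
      simp only [Finset.mem_filter, Finset.mem_univ, true_and]
      exact ⟨α, hα, hPM⟩⟩
  calc _ ≤ _ := Finset.card_le_card hsub
    _ ≤ ∑ j ∈ (Finset.univ : Finset (Fin 4 → Fin p)).filter fun j => Function.Injective j,
          (Finset.univ.filter fun W : Fin p → Fin n → Bool =>
            ∃ α : Fin 4 → ℝ, (∀ i, α i ≠ 0) ∧ IsPM (∑ i, α i • signVec (W (j i)))).card :=
        Finset.card_biUnion_le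
    _ ≤ ∑ j ∈ (Finset.univ : Finset (Fin 4 → Fin p)).filter fun j => Function.Injective j,
          (2 ^ n) ^ (p - 4) * (65536 * 8 ^ n) := by
        refine Finset.sum_le_sum fun j hj => ?_
        simp only [Finset.mem_filter, Finset.mem_univ, true_and] at hj
        exact perj_count j hj
    _ ≤ p ^ 4 * ((2 ^ n) ^ (p - 4) * (65536 * 8 ^ n)) := by
        rw [Finset.sum_const, smul_eq_mul]
        apply Nat.mul_le_mul_right
        calc _ ≤ (Finset.univ : Finset (Fin 4 → Fin p)).card :=
              Finset.card_le_card (Finset.filter_subset _ _)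
          _ = p ^ 4 := by simp


/-- there is `C > 0` such that for all `n` and `4 ≤ p ≤ n - 1`,
`ℙ₄(p,n) ≤ C p⁴ 2^{-n}`. -/
theorem stmt4 :
    ∃ C : ℝ, 0 < C ∧ ∀ n p : ℕ, 4 ≤ p → p + 1 ≤ n →
      probPm 4 p n ≤ C * (p : ℝ) ^ 4 / 2 ^ n := by
  refine ⟨65536, by norm_num, ?_⟩
  intro n p hp _
  unfold probPm
  obtain ⟨q, rfl⟩ := Nat.exists_eq_add_of_le hp
  have hq : 4 + q - 4 = q := by omega
  have hcast : (((Finset.univ.filter fun W : Fin (4 + q) → Fin n → Bool =>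
      PmEvent 4 W).card : ℝ))
      ≤ ((4 + q : ℕ) : ℝ) ^ 4 * ((2 ^ n) ^ q * (65536 * 8 ^ n)) := by
    have := main_count (4 + q) n
    rw [hq] at this
    exact_mod_cast this
  have hD : (0:ℝ) < 2 ^ ((4 + q) * n) := by positivity
  rw [div_le_div_iff₀ hD (by positivity)]
  have h8 : (8:ℝ) ^ n = 2 ^ (3 * n) := by
    rw [show (8:ℝ) = 2 ^ 3 by norm_num, ← pow_mul]
  have h2n : ((2:ℝ) ^ n) ^ q = 2 ^ (n * q) := by rw [← pow_mul]
  have hsplit : (2:ℝ) ^ ((4 + q) * n) = 2 ^ n * (2 ^ (3 * n) * 2 ^ (n * q)) := by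
    rw [← pow_add, ← pow_add]
    congr 1
    ring
  calc ((Finset.univ.filter fun W : Fin (4 + q) → Fin n → Bool =>
          PmEvent 4 W).card : ℝ) * 2 ^ n
      ≤ (((4 + q : ℕ) : ℝ) ^ 4 * ((2 ^ n) ^ q * (65536 * 8 ^ n))) * 2 ^ n := by
        apply mul_le_mul_of_nonneg_right hcast (by positivity)
    _ = 65536 * ((4 + q : ℕ) : ℝ) ^ 4 * 2 ^ ((4 + q) * n) := by
        rw [h8, h2n, hsplit]
        ring
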